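/- For the doubled type A_n quiver, every element of the variety Λ_V is automatically nilpotent: if x ∈ E_V satisfies ψ_i(x) = 0 for all i ∈ I, then x is nilpotent. -/

import Mathlib

/-!
STATEMENT 9: For the doubled type A_n quiver, every element of Λ_V is
automatically nilpotent: if x ∈ E_V satisfies ψ_i(x) = 0 for all i, then x is
nilpotent.

An element x ∈ E_V of the doubled quiver is encoded by its components along the
orientation Ω (the maps d i : V i → V (i-1), for the arrows h_{i,i-1}) and the
components along Ω̄ (the maps u i : V i → V (i+1), for the arrows h_{i,i+1});
the vertex set {1,…,n} is embedded in ℤ, all spaces V_i for i outside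
{1,…,n} being zero, so that precisely the arrows of the type A_n graph carry
nonzero information.
-/

noncomputable section

/-- Transport a graded vector along an equality of indices. -/
def castLM {I : Type*} (V : I → Type*) [∀ i, AddCommGroup (V i)] [∀ i, Module ℂ (V i)]
    {i j : I} (hij : i = j) : V i →ₗ[ℂ] V j := by
  subst hij; exact LinearMap.id

/-- The end vertex of a path: each letter `true` follows an arrow i → i−1 of Ω,
each letter `false` an arrow i → i+1 of Ω̄. -/
def pathEnd : List Bool → ℤ → ℤ
  | [], i => i
  | true :: w, i => pathEnd w (i - 1)
  | false :: w, i => pathEnd w (i + 1)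

/-- The composition x_{h_1} ∘ ⋯ ∘ x_{h_N} along a path of consecutive arrows
(read right to left), starting at vertex i. -/
def pathComp (V : ℤ → Type*) [∀ i, AddCommGroup (V i)] [∀ i, Module ℂ (V i)]
    (d : ∀ i : ℤ, V i →ₗ[ℂ] V (i - 1)) (u : ∀ i : ℤ, V i →ₗ[ℂ] V (i + 1)) :
    (w : List Bool) → (i : ℤ) → (V i →ₗ[ℂ] V (pathEnd w i))
  | [], _ => LinearMap.id
  | true :: w, i => pathComp V d u w (i - 1) ∘ₗ d i
  | false :: w, i => pathComp V d u w (i + 1) ∘ₗ u i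

namespace Stmt9Aux

variable {V : ℤ → Type*} [∀ i, AddCommGroup (V i)] [∀ i, Module ℂ (V i)]
variable (d : ∀ i : ℤ, V i →ₗ[ℂ] V (i - 1)) (u : ∀ i : ℤ, V i →ₗ[ℂ] V (i + 1))

lemma castLM_rfl {i : ℤ} : castLM V (rfl : i = i) = LinearMap.id := rfl

lemma map_from_subsingleton {M N : Type*} [AddCommGroup M] [Module ℂ M]
    [AddCommGroup N] [Module ℂ N] [Subsingleton M] (f : M →ₗ[ℂ] N) : f = 0 := by
  ext x; rw [Subsingleton.elim x 0]; simp

lemma castLM_comp_eq_zero_iff {W : Type*} [AddCommGroup W] [Module ℂ W]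
    {a b : ℤ} (h : a = b) (f : W →ₗ[ℂ] V a) :
    castLM V h ∘ₗ f = 0 ↔ f = 0 := by
  subst h; rw [castLM_rfl]; simp

lemma pathEnd_congr (w : List Bool) {a b : ℤ} (h : a = b) : pathEnd w a = pathEnd w b := by
  rw [h]

lemma pathComp_cast (w : List Bool) {a b : ℤ} (h : a = b) :
    pathComp V d u w b ∘ₗ castLM V h =
      castLM V (pathEnd_congr w h) ∘ₗ pathComp V d u w a := by
  subst h; rw [castLM_rfl, castLM_rfl]; simp

lemma pathEnd_append (w v : List Bool) (i : ℤ) :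
    pathEnd (w ++ v) i = pathEnd v (pathEnd w i) := by
  induction w generalizing i with
  | nil => rfl
  | cons a w ih => cases a <;> simp [pathEnd, ih]

lemma pathComp_append (w v : List Bool) (i : ℤ) :
    pathComp V d u (w ++ v) i =
      castLM V (pathEnd_append w v i).symm ∘ₗ
        pathComp V d u v (pathEnd w i) ∘ₗ pathComp V d u w i := by
  induction w generalizing i with
  | nil => rfl
  | cons a w ih =>
    cases a
    · show pathComp V d u (w ++ v) (i + 1) ∘ₗ u i = _
      rw [ih]; rfl
    · show pathComp V d u (w ++ v) (i - 1) ∘ₗ d i = _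
      rw [ih]; rfl

lemma pathComp_append_zero_left {w : List Bool} {i : ℤ}
    (h : pathComp V d u w i = 0) (v : List Bool) :
    pathComp V d u (w ++ v) i = 0 := by
  rw [pathComp_append, h]; simp

lemma pathComp_append_zero_right {v : List Bool} (w : List Bool) {i : ℤ}
    (h : pathComp V d u v (pathEnd w i) = 0) :
    pathComp V d u (w ++ v) i = 0 := by
  rw [pathComp_append, h]; simp

lemma pathEnd_replicate_true (k : ℕ) (i : ℤ) :
    pathEnd (List.replicate k true) i = i - k := by
  induction k generalizing i with
  | zero => simp [pathEnd]
  | succ k ih => rw [List.replicate_succ]; show pathEnd _ (i-1) = _; rw [ih]; push_cast; ring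

lemma pathEnd_replicate_false (k : ℕ) (i : ℤ) :
    pathEnd (List.replicate k false) i = i + k := by
  induction k generalizing i with
  | zero => simp [pathEnd]
  | succ k ih => rw [List.replicate_succ]; show pathEnd _ (i+1) = _; rw [ih]; push_cast; ring

lemma castLM_id {i : ℤ} (h : i = i) : castLM V h = LinearMap.id := rfl

lemma castLM_trans {a b c : ℤ} (h1 : a = b) (h2 : b = c) :
    castLM V h2 ∘ₗ castLM V h1 = castLM V (h1.trans h2) := by
  subst h1; subst h2; rfl

lemma swap_local
    (hpsi : ∀ i : ℤ,
      castLM V (show i + 1 - 1 = i by ring) ∘ₗ d (i + 1) ∘ₗ u i -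
        castLM V (show i - 1 + 1 = i by ring) ∘ₗ u (i - 1) ∘ₗ d i = 0)
    (w2 : List Bool) (j : ℤ) :
    pathComp V d u (false :: true :: w2) j =
      castLM V (show pathEnd (true :: false :: w2) j = pathEnd (false :: true :: w2) j from
        pathEnd_congr w2 (by ring)) ∘ₗ pathComp V d u (true :: false :: w2) j := by
  have h0 : castLM V (show j + 1 - 1 = j by ring) ∘ₗ d (j + 1) ∘ₗ u j =
      castLM V (show j - 1 + 1 = j by ring) ∘ₗ u (j - 1) ∘ₗ d j :=
    sub_eq_zero.mp (hpsi j)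
  have key : d (j + 1) ∘ₗ u j =
      castLM V (show j - 1 + 1 = j + 1 - 1 by ring) ∘ₗ u (j - 1) ∘ₗ d j := by
    have h1 := congrArg (fun f => castLM V (show j = j + 1 - 1 by ring) ∘ₗ f) h0
    simpa only [← LinearMap.comp_assoc, castLM_trans, castLM_id, LinearMap.id_comp] using h1
  show pathComp V d u w2 (j + 1 - 1) ∘ₗ d (j + 1) ∘ₗ u j = _
  rw [key, ← LinearMap.comp_assoc, pathComp_cast]
  rfl

lemma swap_zero
    (hpsi : ∀ i : ℤ,
      castLM V (show i + 1 - 1 = i by ring) ∘ₗ d (i + 1) ∘ₗ u i -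
        castLM V (show i - 1 + 1 = i by ring) ∘ₗ u (i - 1) ∘ₗ d i = 0)
    (w1 w2 : List Bool) (i : ℤ)
    (h : pathComp V d u (w1 ++ true :: false :: w2) i = 0) :
    pathComp V d u (w1 ++ false :: true :: w2) i = 0 := by
  rw [pathComp_append] at h ⊢
  rw [castLM_comp_eq_zero_iff] at h ⊢
  rw [swap_local d u hpsi, LinearMap.comp_assoc, h, LinearMap.comp_zero]

def inv : List Bool → ℕ
  | [] => 0
  | true :: w => inv w
  | false :: w => w.count true + inv w

lemma count_true_add_count_false (w : List Bool) :
    w.count true + w.count false = w.length := by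
  induction w with
  | nil => rfl
  | cons a w ih => cases a <;> simp [List.count_cons] <;> omega

lemma eq_sorted_of_inv_zero (w : List Bool) (h : inv w = 0) :
    w = List.replicate (w.count true) true ++ List.replicate (w.count false) false := by
  induction w with
  | nil => rfl
  | cons a w ih =>
    cases a
    · have h1 : w.count true = 0 ∧ inv w = 0 := by
        have h2 : w.count true + inv w = 0 := h
        omega
      have hw : w = List.replicate (w.count false) false := by
        rw [List.eq_replicate_iff]
        constructor
        · have := count_true_add_count_false w; omega
        · intro b hb
          cases b
          · rfl
          · exact absurd hb (List.count_eq_zero.mp h1.1)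
      have hct : (false :: w).count true = 0 := by simp [List.count_cons, h1.1]
      have hcf : (false :: w).count false = w.count false + 1 := by simp [List.count_cons]
      rw [hct, hcf, List.replicate_zero, List.nil_append, List.replicate_succ]
      exact congrArg (false :: ·) hw
    · have hct : (true :: w).count true = w.count true + 1 := by simp [List.count_cons]
      have hcf : (true :: w).count false = w.count false := by simp [List.count_cons]
      rw [hct, hcf, List.replicate_succ, List.cons_append]
      exact congrArg (true :: ·) (ih h)

lemma exists_ft (w : List Bool) (h : 0 < inv w) :
    ∃ w1 w2, w = w1 ++ false :: true :: w2 := by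
  induction w with
  | nil => simp [inv] at h
  | cons a w ih =>
    cases a
    · match w with
      | [] => simp [inv, List.count_nil] at h
      | true :: w' => exact ⟨[], w', rfl⟩
      | false :: w' =>
        rcases Nat.eq_zero_or_pos (inv (false :: w')) with h0 | hpos
        · exfalso
          have h2 : (false :: w').count true + inv (false :: w') = inv (false :: false :: w') := rfl
          have h3 : w'.count true + inv w' = inv (false :: w') := rfl
          have hct : (false :: w').count true = w'.count true := by simp [List.count_cons]
          omega
        · obtain ⟨w1, w2, hw⟩ := ih hpos
          exact ⟨false :: w1, w2, by rw [hw]; rfl⟩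
    · obtain ⟨w1, w2, hw⟩ := ih (by simpa [inv] using h)
      exact ⟨true :: w1, w2, by rw [hw]; rfl⟩

lemma inv_swap (w1 w2 : List Bool) :
    inv (w1 ++ false :: true :: w2) = inv (w1 ++ true :: false :: w2) + 1 := by
  induction w1 with
  | nil =>
    show (true :: w2).count true + inv (true :: w2) = inv (false :: w2) + 1
    have h1 : inv (true :: w2) = inv w2 := rfl
    have h2 : inv (false :: w2) = w2.count true + inv w2 := rfl
    have h3 : (true :: w2).count true = w2.count true + 1 := by simp [List.count_cons]
    omega
  | cons a w1 ih =>
    cases a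
    · show (w1 ++ false :: true :: w2).count true + inv (w1 ++ false :: true :: w2)
        = ((w1 ++ true :: false :: w2).count true + inv (w1 ++ true :: false :: w2)) + 1
      have hc : (w1 ++ false :: true :: w2).count true = (w1 ++ true :: false :: w2).count true := by
        simp [List.count_append, List.count_cons]
      omega
    · show inv (w1 ++ false :: true :: w2) = inv (w1 ++ true :: false :: w2) + 1
      exact ih

lemma vanish_down (n : ℤ) (hsupp : ∀ i : ℤ, i < 1 ∨ n < i → Subsingleton (V i))
    (a : ℕ) (ha : n.toNat ≤ a) (i : ℤ) :
    pathComp V d u (List.replicate a true) i = 0 := by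
  by_cases hi : i < 1 ∨ n < i
  · haveI := hsupp i hi
    exact map_from_subsingleton _
  · push_neg at hi
    have hk : i.toNat + (a - i.toNat) = a := by omega
    rw [← hk, List.replicate_add]
    apply pathComp_append_zero_right
    haveI : Subsingleton (V (pathEnd (List.replicate i.toNat true) i)) := by
      apply hsupp
      left
      rw [pathEnd_replicate_true]
      omega
    exact map_from_subsingleton _

lemma vanish_up (n : ℤ) (hsupp : ∀ i : ℤ, i < 1 ∨ n < i → Subsingleton (V i))
    (b : ℕ) (hb : n.toNat ≤ b) (i : ℤ) :
    pathComp V d u (List.replicate b false) i = 0 := by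
  by_cases hi : i < 1 ∨ n < i
  · haveI := hsupp i hi
    exact map_from_subsingleton _
  · push_neg at hi
    have hk : (n + 1 - i).toNat + (b - (n + 1 - i).toNat) = b := by omega
    rw [← hk, List.replicate_add]
    apply pathComp_append_zero_right
    haveI : Subsingleton (V (pathEnd (List.replicate (n + 1 - i).toNat false) i)) := by
      apply hsupp
      right
      rw [pathEnd_replicate_false]
      omega
    exact map_from_subsingleton _

end Stmt9Aux

theorem stmt9 (n : ℤ) (hn : 1 ≤ n)
    (V : ℤ → Type*) [∀ i, AddCommGroup (V i)] [∀ i, Module ℂ (V i)]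
    [∀ i, FiniteDimensional ℂ (V i)]
    (hsupp : ∀ i : ℤ, i < 1 ∨ n < i → Subsingleton (V i))
    (d : ∀ i : ℤ, V i →ₗ[ℂ] V (i - 1)) (u : ∀ i : ℤ, V i →ₗ[ℂ] V (i + 1))
    -- ψ_i(x) = x_{h_{i+1,i}} ∘ x_{h_{i,i+1}} − x_{h_{i-1,i}} ∘ x_{h_{i,i-1}} = 0
    (hpsi : ∀ i : ℤ,
      castLM V (show i + 1 - 1 = i by ring) ∘ₗ d (i + 1) ∘ₗ u i -
        castLM V (show i - 1 + 1 = i by ring) ∘ₗ u (i - 1) ∘ₗ d i = 0) :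
    -- x is nilpotent
    ∃ N : ℕ, 1 ≤ N ∧ ∀ w : List Bool, w.length = N → ∀ i : ℤ,
      pathComp V d u w i = 0 := by
  refine ⟨2 * n.toNat, by omega, ?_⟩
  have H : ∀ k (w : List Bool), Stmt9Aux.inv w = k → w.length = 2 * n.toNat →
      ∀ i, pathComp V d u w i = 0 := by
    intro k
    induction k using Nat.strong_induction_on with
    | _ k IH =>
      intro w hk hlen i
      rcases Nat.eq_zero_or_pos k with h0 | hpos
      · subst h0
        have hs := Stmt9Aux.eq_sorted_of_inv_zero w hk
        rw [hs]
        have hcount := Stmt9Aux.count_true_add_count_false w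
        rw [hlen] at hcount
        rcases le_or_gt n.toNat (w.count true) with hge | hlt
        · exact Stmt9Aux.pathComp_append_zero_left d u
            (Stmt9Aux.vanish_down d u n hsupp _ hge i) _
        · have hb : n.toNat ≤ w.count false := by omega
          exact Stmt9Aux.pathComp_append_zero_right d u _
            (Stmt9Aux.vanish_up d u n hsupp _ hb _)
      · obtain ⟨w1, w2, rfl⟩ := Stmt9Aux.exists_ft w (hk ▸ hpos)
        apply Stmt9Aux.swap_zero d u hpsi
        have hswap := Stmt9Aux.inv_swap w1 w2
        apply IH (Stmt9Aux.inv (w1 ++ true :: false :: w2)) (by omega) _ rfl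
        simp only [List.length_append, List.length_cons] at hlen ⊢
        omega
  intro w hlen i
  exact H (Stmt9Aux.inv w) w rfl hlen i


end
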